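/- Let K ≥ 1 and M ≥ 2 be integers, H an invertible K×K real matrix, and Λ₁,…,Λ_M diagonal K×K real matrices with strictly positive diagonal entries satisfying Λ₁ + ⋯ + Λ_M = I_K. Set C_l := H⁻¹·Λ_l·H for l = 2,…,M, and let P be the KM×KM block matrix whose first block row consists of M copies of I_K and whose block (l,k), for l ≥ 2, equals δ_{lk}·I_K − C_l (P is invertible). Let Ã₀ := diag{Hᵀ·Λ₁⁻¹·H, Hᵀ·Λ₂⁻¹·H, …, Hᵀ·Λ_M⁻¹·H} and A₀ := P^{−T}·Ã₀·P⁻¹. Then A₀·diag{0_{K×K}, I_{K(M−1)}} = [[0_{K×K}, 0], [0, S]], where S := 𝟙·(Hᵀ·Λ₁⁻¹·H)·𝟙ᵀ + diag{Hᵀ·Λ₂⁻¹·H, …, Hᵀ·Λ_M⁻¹·H} with 𝟙 the K(M−1)×K block column of M−1 copies of I_K; moreover S is symmetric positive definite. -/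

import Mathlib

open Matrix

private lemma stmt18_aux_quad {K : ℕ} (G : Matrix (Fin K) (Fin K) ℝ) (a b : Fin K → ℝ) :
    ∑ i, ∑ j, a i * G i j * b j = a ⬝ᵥ G *ᵥ b := by
  simp [dotProduct, mulVec, Finset.mul_sum, mul_assoc]

/-- Section 3.5, dissipation condition (iv): with `Λ_l = diagonal (lam l)` positive diagonal
matrices summing to `I_K`, `C_l = H⁻¹ Λ_l H`, `P` the block change-of-basis matrix,
`Ã₀ = diag{Hᵀ Λ_l⁻¹ H}` and `A₀ = P⁻ᵀ Ã₀ P⁻¹`, one has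
`A₀ · diag{0_K, I_{K(M−1)}} = [[0, 0], [0, S]]` with
`S = 𝟙 (Hᵀ Λ₁⁻¹ H) 𝟙ᵀ + diag{Hᵀ Λ₂⁻¹ H, …, Hᵀ Λ_M⁻¹ H}` symmetric positive definite. -/
theorem stmt_18 (K M : ℕ) (hK : 1 ≤ K) (hM : 2 ≤ M)
    (H : Matrix (Fin K) (Fin K) ℝ) (hH : IsUnit H.det)
    (lam : Fin M → Fin K → ℝ)
    (hpos : ∀ l i, 0 < lam l i)
    (hsum : (∑ l, Matrix.diagonal (lam l)) = (1 : Matrix (Fin K) (Fin K) ℝ))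
    (C : Fin M → Matrix (Fin K) (Fin K) ℝ)
    (hC : ∀ l, C l = H⁻¹ * Matrix.diagonal (lam l) * H)
    (P : Matrix (Fin M × Fin K) (Fin M × Fin K) ℝ)
    (hP : P = Matrix.of fun (x y : Fin M × Fin K) =>
      if x.1.val = 0 then (if x.2 = y.2 then (1 : ℝ) else 0)
      else (if x.1 = y.1 ∧ x.2 = y.2 then (1 : ℝ) else 0) - C x.1 x.2 y.2)
    (Atil : Matrix (Fin M × Fin K) (Fin M × Fin K) ℝ)
    (hAtil : Atil = Matrix.of fun (x y : Fin M × Fin K) =>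
      if x.1 = y.1 then (Hᵀ * (Matrix.diagonal (lam x.1))⁻¹ * H) x.2 y.2 else 0)
    (A₀ : Matrix (Fin M × Fin K) (Fin M × Fin K) ℝ)
    (hA₀ : A₀ = (P⁻¹)ᵀ * Atil * P⁻¹)
    -- diag{0_{K×K}, I_{K(M−1)}}
    (Dg : Matrix (Fin M × Fin K) (Fin M × Fin K) ℝ)
    (hDg : Dg = Matrix.of fun (x y : Fin M × Fin K) =>
      if x = y ∧ x.1.val ≠ 0 then (1 : ℝ) else 0)
    -- the matrix S, indexed by the last M−1 block indices
    (S : Matrix ({l : Fin M // l.val ≠ 0} × Fin K) ({l : Fin M // l.val ≠ 0} × Fin K) ℝ)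
    (hS : S = Matrix.of fun x y =>
      (Hᵀ * (Matrix.diagonal (lam (⟨0, by omega⟩ : Fin M)))⁻¹ * H) x.2 y.2 +
        (if x.1 = y.1 then (Hᵀ * (Matrix.diagonal (lam x.1.1))⁻¹ * H) x.2 y.2 else 0))
    -- the block matrix [[0, 0], [0, S]] written on the full index set
    (R : Matrix (Fin M × Fin K) (Fin M × Fin K) ℝ)
    (hR : R = Matrix.of fun (x y : Fin M × Fin K) =>
      if x.1.val = 0 ∨ y.1.val = 0 then (0 : ℝ)
      else (Hᵀ * (Matrix.diagonal (lam (⟨0, by omega⟩ : Fin M)))⁻¹ * H) x.2 y.2 +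
        (if x.1 = y.1 then (Hᵀ * (Matrix.diagonal (lam x.1))⁻¹ * H) x.2 y.2 else 0)) :
    A₀ * Dg = R ∧ S.PosDef := by
  have hM0 : (0 : ℕ) < M := by omega
  set l0 : Fin M := ⟨0, hM0⟩ with hl0
  have hlamne : ∀ l i, lam l i ≠ 0 := fun l i => (hpos l i).ne'
  -- inverse of the diagonal matrices
  have hdiaginv : ∀ l : Fin M,
      (Matrix.diagonal (lam l))⁻¹ = Matrix.diagonal (fun i => (lam l i)⁻¹) := by
    intro l
    apply inv_eq_right_inv
    rw [diagonal_mul_diagonal]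
    convert diagonal_one with i
    exact mul_inv_cancel₀ (hlamne l i)
  have hΛΛ : ∀ l : Fin M,
      Matrix.diagonal (lam l) * (Matrix.diagonal (lam l))⁻¹ = 1 := by
    intro l
    rw [hdiaginv, diagonal_mul_diagonal]
    convert diagonal_one with i
    exact mul_inv_cancel₀ (hlamne l i)
  set G : Fin M → Matrix (Fin K) (Fin K) ℝ :=
    fun l => Hᵀ * (Matrix.diagonal (lam l))⁻¹ * H with hG
  have hHinvH : (H⁻¹)ᵀ * Hᵀ = 1 := by
    rw [← transpose_mul, Matrix.mul_nonsing_inv _ hH, transpose_one]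
  -- key identity (C l)ᵀ * G l = Hᵀ * H
  have hCtG : ∀ l, (C l)ᵀ * G l = Hᵀ * H := by
    intro l
    rw [hC, hG]
    calc (H⁻¹ * Matrix.diagonal (lam l) * H)ᵀ * (Hᵀ * (Matrix.diagonal (lam l))⁻¹ * H)
        = Hᵀ * (Matrix.diagonal (lam l) * (((H⁻¹)ᵀ * Hᵀ) * ((Matrix.diagonal (lam l))⁻¹ * H))) := by
          simp only [transpose_mul, diagonal_transpose, Matrix.mul_assoc]
      _ = Hᵀ * H := by
          rw [hHinvH, Matrix.one_mul,
            ← Matrix.mul_assoc (Matrix.diagonal (lam l)) ((Matrix.diagonal (lam l))⁻¹) H,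
            hΛΛ, Matrix.one_mul]
  have hCsum : (∑ l, C l) = 1 := by
    have h1 : (∑ l, C l) = H⁻¹ * (∑ l, Matrix.diagonal (lam l)) * H := by
      simp only [hC, Finset.sum_mul, Finset.mul_sum]
    rw [h1, hsum, Matrix.mul_one, Matrix.nonsing_inv_mul _ hH]
  -- explicit inverse of P
  set Q : Matrix (Fin M × Fin K) (Fin M × Fin K) ℝ := Matrix.of fun x y =>
    if y.1.val = 0 then C x.1 x.2 y.2
    else if x.1.val = 0 then (if x.2 = y.2 then (-1 : ℝ) else 0)
    else (if x.1 = y.1 ∧ x.2 = y.2 then (1 : ℝ) else 0) with hQdef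
  -- column block sums of Q
  have hQcol : ∀ (j : Fin K) (y : Fin M × Fin K),
      (∑ m : Fin M, Q (m, j) y) =
        if y.1.val = 0 then (if j = y.2 then (1 : ℝ) else 0) else 0 := by
    intro j y
    by_cases hy : y.1.val = 0
    · simp only [hQdef, of_apply, hy, if_true]
      rw [← Matrix.sum_apply j y.2 Finset.univ (fun m => C m), hCsum, Matrix.one_apply]
    · simp only [hQdef, of_apply, hy, if_false]
      have hyl : y.1 ≠ l0 := fun h => hy (by rw [h])
      have hrw : ∀ m : Fin M,
          (if m.val = 0 then (if j = y.2 then (-1 : ℝ) else 0)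
            else (if m = y.1 ∧ j = y.2 then (1 : ℝ) else 0)) =
          (if m = l0 then (if j = y.2 then (-1 : ℝ) else 0) else 0) +
          (if m = y.1 then (if j = y.2 then (1 : ℝ) else 0) else 0) := by
        intro m
        by_cases hm : m.val = 0
        · have hml : m = l0 := Fin.ext hm
          have hmy : m ≠ y.1 := fun h => hy (h ▸ hm)
          simp [hm, hml, hmy, Ne.symm hyl, show (l0 : Fin M).val = 0 from rfl]
        · have hml : m ≠ l0 := fun h => hm (by simp [h, hl0])
          by_cases hmy : m = y.1
          · simp [hm, hml, hmy, hy, hyl, ite_and]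
          · simp [hm, hml, hmy, ite_and]
      rw [Finset.sum_congr rfl (fun m _ => hrw m), Finset.sum_add_distrib]
      simp only [Finset.sum_ite_eq', Finset.mem_univ, if_true]
      split_ifs <;> norm_num
  have hPQ : P * Q = 1 := by
    ext x y
    rw [Matrix.mul_apply, Fintype.sum_prod_type]
    by_cases hx : x.1.val = 0
    · have hPx : ∀ (m : Fin M) (j : Fin K),
          P x (m, j) = if x.2 = j then (1 : ℝ) else 0 := by
        intro m j; simp [hP, hx]
      simp only [hPx, ite_mul, one_mul, zero_mul]
      have hcol : ∀ m : Fin M,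
          (∑ j, if x.2 = j then Q (m, j) y else 0) = Q (m, x.2) y := by
        intro m; simp
      rw [Finset.sum_congr rfl (fun m _ => hcol m), hQcol x.2 y]
      rw [Matrix.one_apply]
      by_cases hy : y.1.val = 0
      · have hxy1 : x.1 = y.1 := Fin.ext (by rw [hx, hy])
        simp only [hy, if_true]
        by_cases h2 : x.2 = y.2
        · simp [h2, Prod.ext_iff, hxy1]
        · simp [h2, Prod.ext_iff]
      · have : x ≠ y := fun h => hy (h ▸ hx)
        simp [hy, this]
    · have hPx : ∀ (m : Fin M) (j : Fin K),
          P x (m, j) = (if x.1 = m ∧ x.2 = j then (1 : ℝ) else 0) - C x.1 x.2 j := by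
        intro m j; simp [hP, hx]
      simp only [hPx, sub_mul, ite_mul, one_mul, zero_mul, Finset.sum_sub_distrib]
      have h1 : (∑ m : Fin M, ∑ j : Fin K,
          if x.1 = m ∧ x.2 = j then Q (m, j) y else 0) = Q x y := by
        rw [Finset.sum_comm]
        simp [ite_and, Finset.sum_ite_eq]
      have h2 : (∑ m : Fin M, ∑ j : Fin K, C x.1 x.2 j * Q (m, j) y) =
          ∑ j : Fin K, C x.1 x.2 j * ∑ m : Fin M, Q (m, j) y := by
        rw [Finset.sum_comm]
        simp [Finset.mul_sum]
      rw [h1, h2]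
      simp only [hQcol]
      by_cases hy : y.1.val = 0
      · have hxy : x ≠ y := fun h => hx (h ▸ hy)
        simp only [hy, if_true, mul_ite, mul_one, mul_zero]
        rw [Finset.sum_ite_eq' Finset.univ y.2 (fun j => C x.1 x.2 j)]
        simp [hQdef, hy, Matrix.one_apply, hxy]
      · have hQxy : Q x y = if x = y then (1 : ℝ) else 0 := by
          simp [hQdef, hy, hx, Prod.ext_iff]
        simp [hy, hQxy, Matrix.one_apply]
  have hQinv : P⁻¹ = Q := inv_eq_right_inv hPQ
  -- entries of Qᵀ * Atil
  have hN : ∀ x w : Fin M × Fin K, (Qᵀ * Atil) x w =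
      if x.1.val = 0 then (Hᵀ * H) x.2 w.2
      else if w.1.val = 0 then -(G l0 x.2 w.2)
      else if w.1 = x.1 then G x.1 x.2 w.2 else 0 := by
    intro x w
    rw [Matrix.mul_apply, Fintype.sum_prod_type]
    have hAt : ∀ (m : Fin M) (j : Fin K),
        Atil (m, j) w = if m = w.1 then G m j w.2 else 0 := by
      intro m j; simp [hAtil, hG]
    simp only [transpose_apply, hAt, mul_ite, mul_zero]
    rw [Finset.sum_comm]
    simp only [Finset.sum_ite_eq', Finset.mem_univ, if_true]
    -- now goal: ∑ j, Q (w.1, j) x * G w.1 j w.2 = ...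
    by_cases hx : x.1.val = 0
    · simp only [hx, if_true]
      have hQe : ∀ j, Q (w.1, j) x = C w.1 j x.2 := by
        intro j; simp [hQdef, hx]
      rw [← hCtG w.1, Matrix.mul_apply]
      simp [hQe, transpose_apply, hG]
    · simp only [hx, if_false]
      by_cases hw : w.1.val = 0
      · have hwl : w.1 = l0 := Fin.ext hw
        have hQe : ∀ j, Q (w.1, j) x = if j = x.2 then (-1 : ℝ) else 0 := by
          intro j; simp [hQdef, hx, hw]
        simp only [hQe, ite_mul, neg_mul, one_mul, zero_mul]
        rw [Finset.sum_ite_eq' Finset.univ x.2 (fun j => -(G w.1 j w.2))]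
        simp [hw, hwl, show (l0 : Fin M).val = 0 from rfl]
      · have hQe : ∀ j, Q (w.1, j) x =
            if w.1 = x.1 ∧ j = x.2 then (1 : ℝ) else 0 := by
          intro j; simp [hQdef, hx, hw]
        simp only [hQe, ite_mul, one_mul, zero_mul, ite_and]
        by_cases hwx : w.1 = x.1
        · simp [hw, hwx, hx, Finset.sum_ite_eq']
        · simp [hw, hwx, hx]
  constructor
  · -- A₀ * Dg = R
    rw [hA₀, hQinv]
    ext x y
    have hADg : ((Qᵀ * Atil * Q) * Dg) x y =
        if y.1.val = 0 then 0 else (Qᵀ * Atil * Q) x y := by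
      rw [hDg, Matrix.mul_apply]
      by_cases hy : y.1.val = 0
      · simp only [hy, if_true]
        apply Finset.sum_eq_zero
        intro z _
        by_cases hz : z = y
        · subst hz; simp [hy]
        · simp [hz]
      · simp only [hy, if_false]
        rw [Finset.sum_eq_single y]
        · simp [hy]
        · intro z _ hz; simp [hz]
        · intro h; exact absurd (Finset.mem_univ y) h
    rw [hADg]
    by_cases hy : y.1.val = 0
    · simp [hR, hy]
    · simp only [hy, if_false]
      rw [Matrix.mul_apply]
      have hyl : y.1 ≠ l0 := fun h => hy (by rw [h])
      have hne : ((l0, y.2) : Fin M × Fin K) ≠ (y.1, y.2) := by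
        intro h
        exact hyl ((Prod.ext_iff.mp h).1).symm
      have hzero : ∀ z : Fin M × Fin K,
          z ∉ ({(l0, y.2), (y.1, y.2)} : Finset (Fin M × Fin K)) →
          (Qᵀ * Atil) x z * Q z y = 0 := by
        intro z hz
        simp only [Finset.mem_insert, Finset.mem_singleton, not_or] at hz
        obtain ⟨h1, h2⟩ := hz
        have hQz : Q z y = 0 := by
          by_cases hz1 : z.1.val = 0
          · have hzl : z.1 = l0 := Fin.ext hz1
            have hz2 : z.2 ≠ y.2 := fun h => h1 (Prod.ext_iff.mpr ⟨hzl, h⟩)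
            simp [hQdef, hy, hz1, hz2]
          · have hcon : ¬(z.1 = y.1 ∧ z.2 = y.2) := fun hh => h2 (Prod.ext_iff.mpr hh)
            simp [hQdef, hy, hz1, hcon]
        rw [hQz, mul_zero]
      rw [← Finset.sum_subset (Finset.subset_univ {(l0, y.2), (y.1, y.2)})
        (fun z _ hz => hzero z hz), Finset.sum_pair hne]
      have hQ1 : Q (l0, y.2) y = -1 := by simp [hQdef, hy, show (l0 : Fin M).val = 0 from rfl]
      have hQ2 : Q (y.1, y.2) y = 1 := by simp [hQdef, hy]
      rw [hQ1, hQ2, hN, hN, mul_one, mul_neg_one]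
      by_cases hx : x.1.val = 0
      · simp [hR, hx]
      · have hl0v : (l0 : Fin M).val = 0 := rfl
        simp only [hx, if_false, hl0v, if_true, hy, neg_neg]
        rw [hR]
        simp only [of_apply, hx, hy, or_self, if_false]
        by_cases hxy : x.1 = y.1
        · simp [hxy, hG]
        · simp [hxy, Ne.symm hxy, hG]
  · -- S is positive definite
    have hGpd : ∀ l, (G l).PosDef := by
      intro l
      have hDpd : ((Matrix.diagonal (lam l))⁻¹).PosDef := by
        rw [hdiaginv]
        exact PosDef.diagonal (fun i => inv_pos.mpr (hpos l i))
      refine posDef_iff_dotProduct_mulVec.mpr ⟨?_, ?_⟩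
      · show (G l)ᴴ = G l
        rw [show G l = Hᵀ * (Matrix.diagonal (lam l))⁻¹ * H from rfl]
        rw [conjTranspose_eq_transpose_of_trivial, transpose_mul, transpose_mul,
          transpose_transpose, hdiaginv, diagonal_transpose, Matrix.mul_assoc]
      · intro v hv
        have hHv : H *ᵥ v ≠ 0 := by
          intro h
          apply hv
          have h2 : (H⁻¹ * H) *ᵥ v = H⁻¹ *ᵥ (H *ᵥ v) := (mulVec_mulVec _ _ _).symm
          rw [Matrix.nonsing_inv_mul _ hH, one_mulVec, h, mulVec_zero] at h2
          exact h2
        have hpos' := hDpd.dotProduct_mulVec_pos hHv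
        have heq : star v ⬝ᵥ ((Hᵀ * (Matrix.diagonal (lam l))⁻¹ * H) *ᵥ v) =
            star (H *ᵥ v) ⬝ᵥ ((Matrix.diagonal (lam l))⁻¹ *ᵥ (H *ᵥ v)) := by
          simp only [star_trivial]
          rw [← mulVec_mulVec, ← mulVec_mulVec, Matrix.dotProduct_mulVec, vecMul_transpose]
        rw [show G l = Hᵀ * (Matrix.diagonal (lam l))⁻¹ * H from rfl, heq]
        exact hpos'
    have hsymm : ∀ (l : Fin M) (i j : Fin K),
        (Hᵀ * (Matrix.diagonal (lam l))⁻¹ * H) i j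
          = (Hᵀ * (Matrix.diagonal (lam l))⁻¹ * H) j i := by
      intro l i j
      have h1 := (hGpd l).1.apply j i
      rw [star_trivial] at h1
      simpa [hG] using h1
    refine posDef_iff_dotProduct_mulVec.mpr ⟨?_, ?_⟩
    · show Sᴴ = S
      ext x y
      rw [hS]
      simp only [conjTranspose_apply, of_apply, star_trivial]
      rw [hsymm l0 y.2 x.2]
      congr 1
      by_cases hxy : x.1 = y.1
      · rw [hxy]
        simp [hsymm]
      · simp [hxy, Ne.symm hxy]
    · intro v hv
      rw [hS]
      set w : Fin K → ℝ := fun i => ∑ l : {l : Fin M // l.val ≠ 0}, v (l, i) with hw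
      set E : Matrix (Fin K) ({l : Fin M // l.val ≠ 0} × Fin K) ℝ :=
        Matrix.of fun i x => if x.2 = i then (1 : ℝ) else 0 with hE
      set D : Matrix ({l : Fin M // l.val ≠ 0} × Fin K) ({l : Fin M // l.val ≠ 0} × Fin K) ℝ :=
        Matrix.of fun x y =>
          if x.1 = y.1 then (Hᵀ * (Matrix.diagonal (lam x.1.1))⁻¹ * H) x.2 y.2 else 0 with hD
      have hT : (Matrix.of fun (x y : {l : Fin M // l.val ≠ 0} × Fin K) =>
          (Hᵀ * (Matrix.diagonal (lam l0))⁻¹ * H) x.2 y.2 +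
            (if x.1 = y.1 then (Hᵀ * (Matrix.diagonal (lam x.1.1))⁻¹ * H) x.2 y.2 else 0))
          = Eᵀ * (Hᵀ * (Matrix.diagonal (lam l0))⁻¹ * H) * E + D := by
        ext x y
        have h1 : (Eᵀ * (Hᵀ * (Matrix.diagonal (lam l0))⁻¹ * H) * E) x y
            = (Hᵀ * (Matrix.diagonal (lam l0))⁻¹ * H) x.2 y.2 := by
          rw [Matrix.mul_apply]
          have h2 : ∀ i, (Eᵀ * (Hᵀ * (Matrix.diagonal (lam l0))⁻¹ * H)) x i
              = (Hᵀ * (Matrix.diagonal (lam l0))⁻¹ * H) x.2 i := by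
            intro i
            rw [Matrix.mul_apply]
            simp [hE, ite_mul, Finset.sum_ite_eq]
          simp only [h2]
          simp only [h2, hE, of_apply, mul_ite, mul_one, mul_zero]
          simp [Finset.sum_ite_eq']
        simp [h1, hD]
      have hEv : E *ᵥ v = w := by
        ext i
        rw [mulVec, dotProduct, Fintype.sum_prod_type]
        simp [hE, ite_mul, Finset.sum_ite_eq', hw]
      have hDv : star v ⬝ᵥ (D *ᵥ v) = ∑ l : {l : Fin M // l.val ≠ 0},
          ((fun i => v (l, i)) ⬝ᵥ
            ((Hᵀ * (Matrix.diagonal (lam l.1))⁻¹ * H) *ᵥ (fun i => v (l, i)))) := by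
        rw [star_trivial, dotProduct, Fintype.sum_prod_type]
        apply Finset.sum_congr rfl
        intro l _
        rw [dotProduct]
        apply Finset.sum_congr rfl
        intro i _
        congr 1
        rw [mulVec, dotProduct, Fintype.sum_prod_type, mulVec, dotProduct]
        have h3 : ∀ (m : {l : Fin M // l.val ≠ 0}) (j : Fin K),
            D (l, i) (m, j) * v (m, j) =
              if m = l then (Hᵀ * (Matrix.diagonal (lam l.1))⁻¹ * H) i j * v (l, j) else 0 := by
          intro m j
          by_cases hml : m = l
          · simp [hD, hml]
          · simp [hD, hml, Ne.symm hml]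
        simp only [h3]
        rw [Finset.sum_comm]
        simp [Finset.sum_ite_eq']
      have hsplit : star v ⬝ᵥ ((Matrix.of fun (x y : {l : Fin M // l.val ≠ 0} × Fin K) =>
          (Hᵀ * (Matrix.diagonal (lam l0))⁻¹ * H) x.2 y.2 +
            (if x.1 = y.1 then (Hᵀ * (Matrix.diagonal (lam x.1.1))⁻¹ * H) x.2 y.2 else 0)) *ᵥ v)
          = w ⬝ᵥ ((Hᵀ * (Matrix.diagonal (lam l0))⁻¹ * H) *ᵥ w) +
            ∑ l : {l : Fin M // l.val ≠ 0},
              ((fun i => v (l, i)) ⬝ᵥ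
                ((Hᵀ * (Matrix.diagonal (lam l.1))⁻¹ * H) *ᵥ (fun i => v (l, i)))) := by
        rw [hT, add_mulVec, dotProduct_add, hDv]
        congr 1
        rw [star_trivial, ← mulVec_mulVec, ← mulVec_mulVec, Matrix.dotProduct_mulVec,
          vecMul_transpose, hEv]
      rw [hsplit]
      have h1 : 0 ≤ w ⬝ᵥ ((Hᵀ * (Matrix.diagonal (lam l0))⁻¹ * H) *ᵥ w) := by
        have := (hGpd l0).posSemidef.dotProduct_mulVec_nonneg w
        simpa [hG] using this
      have h2 : 0 < ∑ l : {l : Fin M // l.val ≠ 0},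
          ((fun i => v (l, i)) ⬝ᵥ
            ((Hᵀ * (Matrix.diagonal (lam l.1))⁻¹ * H) *ᵥ (fun i => v (l, i)))) := by
        obtain ⟨x, hx⟩ := Function.ne_iff.mp hv
        apply Finset.sum_pos'
        · intro l _
          have := (hGpd l.1).posSemidef.dotProduct_mulVec_nonneg (fun i => v (l, i))
          simpa [hG] using this
        · refine ⟨x.1, Finset.mem_univ _, ?_⟩
          have hvl : (fun i => v (x.1, i)) ≠ 0 := by
            intro h
            exact hx (by simpa using congrFun h x.2)
          have := (hGpd x.1.1).dotProduct_mulVec_pos hvl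
          simpa [hG] using this
      linarith
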